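/- arXiv:math/0410545 — 3 statements merged into one kernel-verified Lean document; each statement's English description precedes it below -/
import Mathlib

section
/- Let P be a lazy, irreducible, aperiodic Markov chain on a finite state space K with stationary distribution π, let A ⊆ K, and set w(t) = inf{y ∈ [0,1] : π(A_y) ≤ t}. Then for 0 ≤ t ≤ π(A) one has Ψ̄(t,Aᶜ) = ∫_{w(t)}^1 (t − π(A_u)) du, and for π(A) < t ≤ 1 one has Ψ̄(t,Aᶜ) = ∫₀^{w(t)} (π(A_u) − t) du. -/
open Finset MeasureTheory

noncomputable section

attribute [local instance] Classical.propDecidable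

variable {K : Type*} [Fintype K]

/-- `matPow P t u v` is the `t`-step transition probability from `u` to `v`. -/
def matPow (P : K → K → ℝ) : ℕ → K → K → ℝ
  | 0 => fun u v => if u = v then 1 else 0
  | (t + 1) => fun u v => ∑ w, matPow P t u w * P w v

/-- `P` is a stochastic matrix with (strictly positive) stationary distribution `π`. -/
structure IsMarkov (P : K → K → ℝ) (π : K → ℝ) : Prop where
  nonneg : ∀ u v, 0 ≤ P u v
  rowSum : ∀ u, ∑ v, P u v = 1
  piPos : ∀ v, 0 < π v
  piSum : ∑ v, π v = 1
  stationary : ∀ v, ∑ u, π u * P u v = π v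

/-- `P` is lazy: every holding probability is at least `1/2`. -/
def IsLazy (P : K → K → ℝ) : Prop := ∀ u, (1 : ℝ) / 2 ≤ P u u

/-- irreducibility: every state can reach every other state. -/
def MCIrreducible (P : K → K → ℝ) : Prop := ∀ u v : K, ∃ t : ℕ, 0 < matPow P t u v

/-- aperiodicity: the gcd of the return times of every state is `1`. -/
def MCAperiodic (P : K → K → ℝ) : Prop :=
  ∀ u : K, ∀ d : ℕ, (∀ t : ℕ, 0 < matPow P t u u → d ∣ t) → d ≤ 1

/-- reversibility: the detailed balance condition. -/
def IsReversible (P : K → K → ℝ) (π : K → ℝ) : Prop :=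
  ∀ u v, π u * P u v = π v * P v u

/-- `π`-measure of a set. -/
def meas (π : K → ℝ) (A : Finset K) : ℝ := ∑ v ∈ A, π v

/-- the time reversal `P̄(u,v) = π(v) P(v,u) / π(u)`. -/
def rev (P : K → K → ℝ) (π : K → ℝ) (u v : K) : ℝ := π v * P v u / π u

/-- transition probability from a point into a set, w.r.t. kernel `R`. -/
def setProb (R : K → K → ℝ) (v : K) (C : Finset K) : ℝ := ∑ c ∈ C, R v c

/-- the level set `A_u = {y : R(y,A) > u}`, w.r.t. kernel `R`. -/
def levelSet (R : K → K → ℝ) (A : Finset K) (u : ℝ) : Finset K :=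
  Finset.univ.filter (fun y => u < setProb R y A)

/-- `g` is a fractional subset of `S` of measure `t`. -/
def IsFracSub (π : K → ℝ) (S : Finset K) (g : K → ℝ) (t : ℝ) : Prop :=
  (∀ v, 0 ≤ g v ∧ g v ≤ 1) ∧ (∀ v ∉ S, g v = 0) ∧ ∑ v, g v * π v = t

/-- ergodic flow from a fractional subset `g` into `C`, w.r.t. kernel `R`. -/
def fracFlow (R : K → K → ℝ) (π : K → ℝ) (g : K → ℝ) (C : Finset K) : ℝ :=
  ∑ v, g v * π v * setProb R v C

/-- `Ψ(t, Aᶜ)` w.r.t. kernel `R`: for `t ≤ π(A)` the minimal flow into `Aᶜ` from a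
fractional subset of `A` of measure `t`; for `t > π(A)` the minimal flow into `A`
from a fractional subset of `Aᶜ` of measure `1 − t`. -/
def Psi (R : K → K → ℝ) (π : K → ℝ) (A : Finset K) (t : ℝ) : ℝ :=
  if t ≤ meas π A then
    sInf {q : ℝ | ∃ g : K → ℝ, IsFracSub π A g t ∧ q = fracFlow R π g Aᶜ}
  else
    sInf {q : ℝ | ∃ g : K → ℝ, IsFracSub π Aᶜ g (1 - t) ∧ q = fracFlow R π g A}

/-- `Ψ_big(t, Aᶜ)` w.r.t. kernel `R`: maximal flow into `Aᶜ` from a fractional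
subset of `A` of measure `t`. -/
def PsiSup (R : K → K → ℝ) (π : K → ℝ) (A : Finset K) (t : ℝ) : ℝ :=
  sSup {q : ℝ | ∃ g : K → ℝ, IsFracSub π A g t ∧ q = fracFlow R π g Aᶜ}

/-- the spread `ψ⁺(A)` (w.r.t. kernel `R`). -/
def psiPlus (R : K → K → ℝ) (π : K → ℝ) (A : Finset K) : ℝ :=
  (∫ t in (0:ℝ)..(meas π A), Psi R π A t) / (meas π A) ^ 2

/-- the quantity `ψ⁻(A)` (w.r.t. kernel `R`). -/
def psiMinus (R : K → K → ℝ) (π : K → ℝ) (A : Finset K) : ℝ :=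
  (∫ t in (meas π A)..(1:ℝ), Psi R π A t) / (meas π A) ^ 2

/-- the modified spread `ψ_mod(A)` (w.r.t. kernel `R`). -/
def psiMod (R : K → K → ℝ) (π : K → ℝ) (A : Finset K) : ℝ :=
  (∫ t in (0:ℝ)..(1:ℝ), Psi R π A t / min t (1 - t)) / meas π A

/-- the global spread `ψ_gl(A)` (w.r.t. kernel `R`). -/
def psiGl (R : K → K → ℝ) (π : K → ℝ) (A : Finset K) : ℝ :=
  (∫ t in (0:ℝ)..(1:ℝ), Psi R π A t) / (meas π A) ^ 2

/-- the quantity `ψ_big(A)` (w.r.t. kernel `R`). -/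
def psiBig (R : K → K → ℝ) (π : K → ℝ) (A : Finset K) : ℝ :=
  (∫ t in (0:ℝ)..(meas π A), PsiSup R π A t) / (meas π A) ^ 2

/-- the evolving-set quantity `ψ_evo(A)`, with level sets taken w.r.t. kernel `R`. -/
def psiEvo (R : K → K → ℝ) (π : K → ℝ) (A : Finset K) : ℝ :=
  1 - ∫ u in (0:ℝ)..(1:ℝ), Real.sqrt (meas π (levelSet R A u) / meas π A)

/-- ergodic flow `Q(B,C)`. -/
def ergFlow (P : K → K → ℝ) (π : K → ℝ) (B C : Finset K) : ℝ :=
  ∑ u ∈ B, ∑ v ∈ C, π u * P u v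

/-- conductance `Φ(A)`. -/
def conductance (P : K → K → ℝ) (π : K → ℝ) (A : Finset K) : ℝ :=
  ergFlow P π A Aᶜ / meas π A

def Qone (P : K → K → ℝ) (π : K → ℝ) (C D : Finset K) : ℝ :=
  ∑ v ∈ C, setProb P v D * π v

def Qtwo (P : K → K → ℝ) (π : K → ℝ) (C D : Finset K) : ℝ :=
  ∑ v ∈ C, Real.sqrt (setProb P v D) * π v

def Qinfty (P : K → K → ℝ) (π : K → ℝ) (C D : Finset K) : ℝ :=
  meas π (C.filter (fun v => 0 < setProb P v D))

/-- discrete gradient `h₁⁺(A)`. -/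
def hOneP (P : K → K → ℝ) (π : K → ℝ) (A : Finset K) : ℝ :=
  Qone P π A Aᶜ / min (meas π A) (meas π Aᶜ)

/-- discrete gradient `h₁⁻(A)`. -/
def hOneM (P : K → K → ℝ) (π : K → ℝ) (A : Finset K) : ℝ :=
  Qone P π Aᶜ A / min (meas π A) (meas π Aᶜ)

/-- discrete gradient `h₂⁺(A)`. -/
def hTwoP (P : K → K → ℝ) (π : K → ℝ) (A : Finset K) : ℝ :=
  Qtwo P π A Aᶜ / min (meas π A) (meas π Aᶜ)

/-- discrete gradient `h₂⁻(A)`. -/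
def hTwoM (P : K → K → ℝ) (π : K → ℝ) (A : Finset K) : ℝ :=
  Qtwo P π Aᶜ A / min (meas π A) (meas π Aᶜ)

/-- discrete gradient `h_∞⁺(A)`. -/
def hInfP (P : K → K → ℝ) (π : K → ℝ) (A : Finset K) : ℝ :=
  Qinfty P π A Aᶜ / min (meas π A) (meas π Aᶜ)

/-- discrete gradient `h_∞⁻(A)`. -/
def hInfM (P : K → K → ℝ) (π : K → ℝ) (A : Finset K) : ℝ :=
  Qinfty P π Aᶜ A / min (meas π A) (meas π Aᶜ)

/-- `p` is a probability distribution. -/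
def IsDist (p : K → ℝ) : Prop := (∀ v, 0 ≤ p v) ∧ ∑ v, p v = 1

/-- the distribution after `t` steps starting from `p`. -/
def stepDist (P : K → K → ℝ) (p : K → ℝ) (t : ℕ) (v : K) : ℝ :=
  ∑ u, p u * matPow P t u v

/-- total variation distance. -/
def tvDist (μ π : K → ℝ) : ℝ := (1 / 2) * ∑ v, |μ v - π v|

/-- chi-square distance. -/
def chi2Dist (μ π : K → ℝ) : ℝ := ∑ v, (μ v / π v - 1) ^ 2 * π v

/-- total variation mixing time `τ(ε)`: the max over initial distributions of the
least time at which total variation distance drops to `ε`. -/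
def mixTV (P : K → K → ℝ) (π : K → ℝ) (ε : ℝ) : ℕ :=
  sSup {n : ℕ | ∃ p : K → ℝ, IsDist p ∧
    n = sInf {t : ℕ | tvDist (stepDist P p t) π ≤ ε}}

/-- chi-square mixing time `χ²(ε)`. -/
def mixChi2 (P : K → K → ℝ) (π : K → ℝ) (ε : ℝ) : ℕ :=
  sSup {n : ℕ | ∃ p : K → ℝ, IsDist p ∧
    n = sInf {t : ℕ | chi2Dist (stepDist P p t) π ≤ ε}}

/-- `π₀ = min_v π(v)`. -/
def piMin (π : K → ℝ) : ℝ := sInf {r : ℝ | ∃ v : K, r = π v}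

/-- `ψ⁺(x)`: worst spread over sets of measure at most `x`. -/
def psiPlusSize (R : K → K → ℝ) (π : K → ℝ) (x : ℝ) : ℝ :=
  sInf {r : ℝ | ∃ A : Finset K, 0 < meas π A ∧ meas π A ≤ x ∧ r = psiPlus R π A}

/-- `ψ_evo(x)`: worst evolving-set quantity over sets of measure at most `x`. -/
def psiEvoSize (R : K → K → ℝ) (π : K → ℝ) (x : ℝ) : ℝ :=
  sInf {r : ℝ | ∃ A : Finset K, 0 < meas π A ∧ meas π A ≤ x ∧ r = psiEvo R π A}

/-- `ψ_big(x)`: worst `ψ_big` over sets of measure at most `x`. -/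
def psiBigSize (R : K → K → ℝ) (π : K → ℝ) (x : ℝ) : ℝ :=
  sInf {r : ℝ | ∃ A : Finset K, 0 < meas π A ∧ meas π A ≤ x ∧ r = psiBig R π A}

/-- Dirichlet form. -/
def dirichletForm (P : K → K → ℝ) (π : K → ℝ) (f : K → ℝ) : ℝ :=
  (1 / 2) * ∑ u, ∑ v, π u * P u v * (f u - f v) ^ 2

/-- variance w.r.t. `π`. -/
def varPi (π : K → ℝ) (f : K → ℝ) : ℝ :=
  ∑ v, π v * f v ^ 2 - (∑ v, π v * f v) ^ 2

/-- the spectral gap `λ`. -/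
def specGap (P : K → K → ℝ) (π : K → ℝ) : ℝ :=
  sInf {r : ℝ | ∃ f : K → ℝ, (∃ u v, f u ≠ f v) ∧ r = dirichletForm P π f / varPi π f}

/-- `P_* = 1 − min_{u ∈ A} P(u, A)`. -/
def Pstar (P : K → K → ℝ) (A : Finset K) : ℝ :=
  1 - sInf {r : ℝ | ∃ u ∈ A, r = setProb P u A}

/-- `P_min = min {P(u,v)/π(v) : u ∈ A, v ∈ Aᶜ, P(u,v) > 0}`. -/
def PminEdge (P : K → K → ℝ) (π : K → ℝ) (A : Finset K) : ℝ :=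
  sInf {r : ℝ | ∃ u ∈ A, ∃ v ∈ Aᶜ, 0 < P u v ∧ r = P u v / π v}

/-- `w(t) = inf {y ∈ [0,1] : π(A_y) ≤ t}`. -/
def wfun (R : K → K → ℝ) (π : K → ℝ) (A : Finset K) (t : ℝ) : ℝ :=
  sInf {y : ℝ | y ∈ Set.Icc (0:ℝ) 1 ∧ meas π (levelSet R A y) ≤ t}


section Aux

lemma step_integrable (c d a b : ℝ) (hd : 0 ≤ d) :
    IntervalIntegrable (fun u => if u < c then d else 0) volume a b := by
  apply Antitone.intervalIntegrable
  intro x y hxy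
  dsimp only
  split_ifs with h1 h2
  · exact le_rfl
  · exact absurd (lt_of_le_of_lt hxy h1) h2
  · exact hd
  · exact le_rfl

lemma step_integral (a b c : ℝ) (hab : a ≤ b) :
    ∫ u in a..b, (if u < c then (1:ℝ) else 0) = min (max c a) b - a := by
  have h1 : (fun u : ℝ => if u < c then (1:ℝ) else 0)
      = Set.indicator (Set.Iio c) (fun _ => (1:ℝ)) := by
    funext u
    simp [Set.indicator_apply, Set.mem_Iio]
  rw [show (∫ u in a..b, (if u < c then (1:ℝ) else 0))
      = ∫ u in a..b, Set.indicator (Set.Iio c) (fun _ => (1:ℝ)) u from by rw [← h1],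
    intervalIntegral.integral_of_le hab,
    MeasureTheory.setIntegral_indicator measurableSet_Iio,
    MeasureTheory.setIntegral_const]
  rcases le_or_gt c a with h | h
  · have hs : Set.Ioc a b ∩ Set.Iio c = ∅ := by
      ext u
      simp only [Set.mem_inter_iff, Set.mem_Ioc, Set.mem_Iio, Set.mem_empty_iff_false, iff_false,
        not_and, and_imp]
      intro h1 _ ; linarith
    rw [hs]
    simp [max_eq_right h, min_eq_left hab]
  · rcases le_or_gt c b with h2 | h2
    · have hs : Set.Ioc a b ∩ Set.Iio c = Set.Ioo a c := by
        ext u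
        simp only [Set.mem_inter_iff, Set.mem_Ioc, Set.mem_Iio, Set.mem_Ioo]
        constructor
        · rintro ⟨⟨hu1, _⟩, hu2⟩; exact ⟨hu1, hu2⟩
        · rintro ⟨hu1, hu2⟩; exact ⟨⟨hu1, le_trans hu2.le h2⟩, hu2⟩
      rw [hs, Real.volume_real_Ioo_of_le (by linarith)]
      rw [max_eq_left h.le, min_eq_left h2]
      simp
    · have hs : Set.Ioc a b ∩ Set.Iio c = Set.Ioc a b := by
        apply Set.inter_eq_left.2
        intro u hu
        exact lt_of_le_of_lt hu.2 h2
      rw [hs, Real.volume_real_Ioc_of_le (by linarith)]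
      rw [max_eq_left (le_trans hab h2.le), min_eq_right h2.le]
      simp

variable {K : Type*} [Fintype K]

lemma meas_mono (π : K → ℝ) (hπ : ∀ v, 0 ≤ π v) {S T : Finset K} (h : S ⊆ T) :
    meas π S ≤ meas π T :=
  Finset.sum_le_sum_of_subset_of_nonneg h (fun v _ _ => hπ v)

lemma levelSet_anti (R : K → K → ℝ) (A : Finset K) {x y : ℝ} (h : x ≤ y) :
    levelSet R A y ⊆ levelSet R A x := by
  intro v hv
  rw [levelSet, Finset.mem_filter] at hv ⊢
  exact ⟨hv.1, lt_of_le_of_lt h hv.2⟩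

lemma F_anti (R : K → K → ℝ) (π : K → ℝ) (A : Finset K) (hπ : ∀ v, 0 ≤ π v) :
    Antitone (fun u => meas π (levelSet R A u)) :=
  fun x y h => meas_mono π hπ (levelSet_anti R A h)

lemma F_integrable (R : K → K → ℝ) (π : K → ℝ) (A : Finset K) (hπ : ∀ v, 0 ≤ π v)
    (a b : ℝ) :
    IntervalIntegrable (fun u => meas π (levelSet R A u)) volume a b :=
  (F_anti R π A hπ).intervalIntegrable

lemma integral_F (R : K → K → ℝ) (π : K → ℝ) (A : Finset K) (hπ : ∀ v, 0 ≤ π v)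
    (a b : ℝ) (hab : a ≤ b) :
    ∫ u in a..b, meas π (levelSet R A u)
      = ∑ y, π y * (min (max (setProb R y A) a) b - a) := by
  have hF : ∀ u, meas π (levelSet R A u) = ∑ y, (if u < setProb R y A then π y else 0) := by
    intro u
    rw [meas, levelSet, Finset.sum_filter]
  calc ∫ u in a..b, meas π (levelSet R A u)
      = ∫ u in a..b, ∑ y, (if u < setProb R y A then π y else 0) := by
        apply intervalIntegral.integral_congr
        intro u _
        exact hF u
    _ = ∑ y, ∫ u in a..b, (if u < setProb R y A then π y else 0) :=
        intervalIntegral.integral_finset_sum (fun y _ => step_integrable _ _ _ _ (hπ y))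
    _ = ∑ y, π y * (min (max (setProb R y A) a) b - a) := by
        refine Finset.sum_congr rfl fun y _ => ?_
        have h2 : (fun u : ℝ => if u < setProb R y A then π y else 0)
            = fun u => π y * (if u < setProb R y A then (1:ℝ) else 0) := by
          funext u; split_ifs <;> ring
        rw [show (∫ u in a..b, (if u < setProb R y A then π y else 0))
            = ∫ u in a..b, π y * (if u < setProb R y A then (1:ℝ) else 0) from by rw [← h2],
          intervalIntegral.integral_const_mul, step_integral _ _ _ hab]


lemma greedy_max (π : K → ℝ) (hπ : ∀ v, 0 < π v) (S : Finset K) (hS : S.Nonempty)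
    (f : K → ℝ) (t : ℝ) (ht0 : 0 ≤ t) (ht1 : t ≤ meas π S) :
    ∃ θ : ℝ, (∃ v ∈ S, f v = θ) ∧
      meas π (S.filter (fun v => θ < f v)) ≤ t ∧
      t ≤ meas π (S.filter (fun v => θ ≤ f v)) ∧
      IsGreatest {m : ℝ | ∃ g : K → ℝ, IsFracSub π S g t ∧ m = ∑ v, g v * π v * f v}
        (t * θ + ∑ v ∈ S, max (f v - θ) 0 * π v) := by
  classical
  set vals := S.image f with hvals
  have hvne : vals.Nonempty := hS.image f
  set T := vals.filter (fun c => t ≤ meas π (S.filter (fun v => c ≤ f v))) with hT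
  have hTne : T.Nonempty := by
    refine ⟨vals.min' hvne, Finset.mem_filter.2 ⟨vals.min'_mem hvne, ?_⟩⟩
    have hfil : S.filter (fun v => vals.min' hvne ≤ f v) = S := by
      apply Finset.filter_true_of_mem
      intro v hv
      exact vals.min'_le (f v) (Finset.mem_image_of_mem f hv)
    rw [hfil]; exact ht1
  set θ := T.max' hTne with hθ
  have hθT : θ ∈ T := T.max'_mem hTne
  have hθvals : θ ∈ vals := (Finset.mem_filter.1 hθT).1
  obtain ⟨v₀, hv₀S, hv₀⟩ := Finset.mem_image.1 hθvals
  have hge : t ≤ meas π (S.filter (fun v => θ ≤ f v)) := (Finset.mem_filter.1 hθT).2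
  set B := S.filter (fun v => θ < f v) with hB
  set C := S.filter (fun v => f v = θ) with hC
  have hBt : meas π B ≤ t := by
    rcases B.eq_empty_or_nonempty with hBe | hBne
    · rw [hBe]; simpa [meas] using ht0
    · have hBim : (B.image f).Nonempty := hBne.image f
      obtain ⟨vb, hvbB, hvb⟩ := Finset.mem_image.1 ((B.image f).min'_mem hBim)
      have hcvals : f vb ∈ vals :=
        Finset.mem_image_of_mem f (Finset.mem_of_mem_filter vb hvbB)
      have hθc : θ < f vb := (Finset.mem_filter.1 hvbB).2
      have hcT : f vb ∉ T := by
        intro hcT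
        exact absurd (T.le_max' (f vb) hcT) (not_le.2 hθc)
      have hlt : meas π (S.filter (fun v => f vb ≤ f v)) < t := by
        by_contra hcon
        exact hcT (Finset.mem_filter.2 ⟨hcvals, not_lt.1 hcon⟩)
      have hsub : B ⊆ S.filter (fun v => f vb ≤ f v) := by
        intro v hv
        refine Finset.mem_filter.2 ⟨Finset.mem_of_mem_filter v hv, ?_⟩
        have h5 := (B.image f).min'_le (f v) (Finset.mem_image_of_mem f hv)
        rw [← hvb] at h5
        exact h5
      calc meas π B ≤ meas π (S.filter (fun v => f vb ≤ f v)) :=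
            meas_mono π (fun v => (hπ v).le) hsub
        _ ≤ t := hlt.le
  have hBCd : Disjoint B C := by
    rw [Finset.disjoint_left]
    intro v hvB hvC
    exact absurd (Finset.mem_filter.1 hvC).2 (ne_of_gt (Finset.mem_filter.1 hvB).2)
  have hBC : B ∪ C = S.filter (fun v => θ ≤ f v) := by
    ext v
    simp only [hB, hC, Finset.mem_union, Finset.mem_filter]
    constructor
    · rintro (⟨h1, h2⟩ | ⟨h1, h2⟩)
      · exact ⟨h1, h2.le⟩
      · exact ⟨h1, h2.ge⟩
    · rintro ⟨h1, h2⟩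
      rcases eq_or_lt_of_le h2 with h3 | h3
      · exact Or.inr ⟨h1, h3.symm⟩
      · exact Or.inl ⟨h1, h3⟩
  have hmeasBC : meas π B + meas π C = meas π (S.filter (fun v => θ ≤ f v)) := by
    rw [← hBC, meas, meas, meas, Finset.sum_union hBCd]
  have hCne : C.Nonempty := ⟨v₀, Finset.mem_filter.2 ⟨hv₀S, hv₀⟩⟩
  have hπC : 0 < meas π C := Finset.sum_pos (fun v _ => hπ v) hCne
  set α := (t - meas π B) / meas π C with hα
  have hα0 : 0 ≤ α := div_nonneg (by linarith) hπC.le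
  have hα1 : α ≤ 1 := by
    rw [div_le_one hπC]
    linarith
  have hαC : α * meas π C = t - meas π B := div_mul_cancel₀ _ (ne_of_gt hπC)
  set g := fun v => (if v ∈ B then (1:ℝ) else 0) + (if v ∈ C then α else 0) with hg
  have hsum_ite : ∀ (D : Finset K) (h : K → ℝ),
      ∑ v, (if v ∈ D then h v else 0) = ∑ v ∈ D, h v := by
    intro D h
    rw [Finset.sum_ite_mem, Finset.univ_inter]
  have hgFrac : IsFracSub π S g t := by
    refine ⟨fun v => ?_, fun v hv => ?_, ?_⟩
    · simp only [hg]
      by_cases h1 : v ∈ B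
      · have h2 : v ∉ C := Finset.disjoint_left.1 hBCd h1
        simp [h1, h2]
      · by_cases h2 : v ∈ C <;> simp [h1, h2, hα0, hα1]
    · have h1 : v ∉ B := fun h => hv (Finset.mem_of_mem_filter v h)
      have h2 : v ∉ C := fun h => hv (Finset.mem_of_mem_filter v h)
      simp [hg, h1, h2]
    · have : ∀ v, g v * π v = (if v ∈ B then π v else 0) + (if v ∈ C then α * π v else 0) := by
        intro v
        simp only [hg]
        split_ifs <;> ring
      rw [Finset.sum_congr rfl (fun v _ => this v), Finset.sum_add_distrib,
        hsum_ite B (fun v => π v), hsum_ite C (fun v => α * π v), ← Finset.mul_sum]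
      rw [show (∑ v ∈ C, π v) = meas π C from rfl]
      rw [show (∑ v ∈ B, π v) = meas π B from rfl]
      linarith [hαC]
  have hmaxB : ∑ v ∈ S, max (f v - θ) 0 * π v = ∑ v ∈ B, (f v - θ) * π v := by
    rw [hB, Finset.sum_filter]
    refine Finset.sum_congr rfl fun v hv => ?_
    by_cases h1 : θ < f v
    · rw [if_pos h1, max_eq_left (by linarith)]
    · rw [if_neg h1, max_eq_right (by push_neg at h1; linarith), zero_mul]
  have hval : ∑ v, g v * π v * f v = t * θ + ∑ v ∈ S, max (f v - θ) 0 * π v := by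
    have : ∀ v, g v * π v * f v
        = (if v ∈ B then π v * f v else 0) + (if v ∈ C then α * (π v * f v) else 0) := by
      intro v
      simp only [hg]
      split_ifs <;> ring
    rw [Finset.sum_congr rfl (fun v _ => this v), Finset.sum_add_distrib,
      hsum_ite B (fun v => π v * f v), hsum_ite C (fun v => α * (π v * f v)), ← Finset.mul_sum]
    have hCsum : ∑ v ∈ C, π v * f v = θ * meas π C := by
      rw [meas, Finset.mul_sum]
      refine Finset.sum_congr rfl fun v hv => ?_
      rw [(Finset.mem_filter.1 hv).2]; ring
    have hBsum : ∑ v ∈ B, (f v - θ) * π v = ∑ v ∈ B, π v * f v - θ * meas π B := by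
      rw [meas, Finset.mul_sum, ← Finset.sum_sub_distrib]
      refine Finset.sum_congr rfl fun v hv => ?_
      ring
    rw [hmaxB, hCsum, hBsum]
    have : α * (θ * meas π C) = θ * (t - meas π B) := by
      rw [← hαC]; ring
    linarith [this]
  refine ⟨θ, ⟨v₀, hv₀S, hv₀⟩, hBt, hge, ⟨⟨g, hgFrac, hval.symm⟩, ?_⟩⟩
  rintro m ⟨g', ⟨hg'01, hg'0, hg's⟩, rfl⟩
  have key : ∀ v, g' v * π v * f v ≤ g' v * π v * θ + (if v ∈ B then (f v - θ) * π v else 0) := by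
    intro v
    by_cases hvB : v ∈ B
    · have h1 : θ < f v := (Finset.mem_filter.1 hvB).2
      have h2 := (hg'01 v).2
      have h3 := (hg'01 v).1
      have h4 := (hπ v).le
      rw [if_pos hvB]
      nlinarith [mul_nonneg (mul_nonneg (sub_nonneg.2 h2) h4) (sub_nonneg.2 h1.le)]
    · rw [if_neg hvB]
      by_cases hvS : v ∈ S
      · have hfv : f v ≤ θ := by
          by_contra h
          exact hvB (Finset.mem_filter.2 ⟨hvS, lt_of_not_ge h⟩)
        have h3 := (hg'01 v).1
        have h4 := (hπ v).le
        nlinarith [mul_nonneg (mul_nonneg h3 h4) (sub_nonneg.2 hfv)]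
      · rw [hg'0 v hvS]
        simp
  calc ∑ v, g' v * π v * f v
      ≤ ∑ v, (g' v * π v * θ + if v ∈ B then (f v - θ) * π v else 0) :=
        Finset.sum_le_sum (fun v _ => key v)
    _ = t * θ + ∑ v ∈ S, max (f v - θ) 0 * π v := by
        rw [Finset.sum_add_distrib, hsum_ite B (fun v => (f v - θ) * π v), hmaxB]
        have : ∑ v, g' v * π v * θ = t * θ := by
          rw [← Finset.sum_mul, hg's]
        rw [this]



lemma setProb_facts (R : K → K → ℝ) (π : K → ℝ) (A : Finset K)
    (hRnn : ∀ y v, 0 ≤ R y v) (hrow : ∀ y, ∑ v, R y v = 1)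
    (hdiag : ∀ y, 1/2 ≤ R y y) :
    (∀ y, 0 ≤ setProb R y A) ∧ (∀ y, setProb R y A ≤ 1) ∧
    (∀ y ∈ A, 1/2 ≤ setProb R y A) ∧ (∀ y ∉ A, setProb R y A ≤ 1/2) ∧
    (∀ y, setProb R y A + setProb R y Aᶜ = 1) := by
  have hsplit : ∀ y, setProb R y A + setProb R y Aᶜ = 1 := by
    intro y
    rw [setProb, setProb, Finset.sum_add_sum_compl]
    exact hrow y
  have h0 : ∀ y, 0 ≤ setProb R y A := fun y => Finset.sum_nonneg fun c _ => hRnn y c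
  have h0c : ∀ y, 0 ≤ setProb R y Aᶜ := fun y => Finset.sum_nonneg fun c _ => hRnn y c
  have h1 : ∀ y, setProb R y A ≤ 1 := by
    intro y; linarith [hsplit y, h0c y]
  refine ⟨h0, h1, ?_, ?_, hsplit⟩
  · intro y hy
    have := Finset.single_le_sum (fun c (_ : c ∈ A) => hRnn y c) hy
    calc (1:ℝ)/2 ≤ R y y := hdiag y
      _ ≤ setProb R y A := this
  · intro y hy
    have h2 : R y y ≤ setProb R y Aᶜ :=
      Finset.single_le_sum (fun c (_ : c ∈ Aᶜ) => hRnn y c) (Finset.mem_compl.2 hy)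
    linarith [hdiag y, hsplit y]

lemma part_one (R : K → K → ℝ) (π : K → ℝ) (A : Finset K)
    (hπpos : ∀ v, 0 < π v) (hπ1 : ∑ v, π v = 1)
    (hRnn : ∀ y v, 0 ≤ R y v) (hrow : ∀ y, ∑ v, R y v = 1)
    (hdiag : ∀ y, 1/2 ≤ R y y)
    (t : ℝ) (ht0 : 0 ≤ t) (ht1 : t ≤ meas π A) :
    Psi R π A t = ∫ u in (wfun R π A t)..(1:ℝ), (t - meas π (levelSet R A u)) := by
  classical
  have hπnn : ∀ v, 0 ≤ π v := fun v => (hπpos v).le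
  obtain ⟨hf0, hf1, hfA, hfAc, hsplit⟩ := setProb_facts R π A hRnn hrow hdiag
  have hflowAc : ∀ g : K → ℝ, ∀ s : ℝ, IsFracSub π A g s →
      fracFlow R π g Aᶜ = s - ∑ v, g v * π v * setProb R v A := by
    rintro g s ⟨h01, h0, hs⟩
    rw [fracFlow, ← hs, ← Finset.sum_sub_distrib]
    refine Finset.sum_congr rfl fun v _ => ?_
    linear_combination (g v * π v) * hsplit v
  rcases A.eq_empty_or_nonempty with hAe | hAne
  · subst hAe
    have ht : t = 0 := le_antisymm (by simpa [meas] using ht1) ht0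
    subst ht
    have hW0 : (0:ℝ) ∈ {y : ℝ | y ∈ Set.Icc (0:ℝ) 1 ∧ meas π (levelSet R (∅ : Finset K) y) ≤ 0} := by
      constructor
      · exact ⟨le_refl 0, by norm_num⟩
      · have : levelSet R (∅ : Finset K) 0 = ∅ := by
          rw [levelSet]
          apply Finset.filter_false_of_mem
          intro y _
          simp [setProb]
        rw [this]
        simp [meas]
    have hwz : wfun R π (∅ : Finset K) 0 = 0 := by
      rw [wfun]
      apply le_antisymm
      · exact csInf_le ⟨0, fun y hy => hy.1.1⟩ hW0
      · exact le_csInf ⟨0, hW0⟩ (fun y hy => hy.1.1)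
    rw [hwz]
    have hInt : ∫ u in (0:ℝ)..(1:ℝ), ((0:ℝ) - meas π (levelSet R (∅ : Finset K) u)) = 0 := by
      have hcongr : ∫ u in (0:ℝ)..(1:ℝ), ((0:ℝ) - meas π (levelSet R (∅ : Finset K) u))
          = ∫ u in (0:ℝ)..(1:ℝ), (0:ℝ) := by
        apply intervalIntegral.integral_congr
        intro u hu
        rw [Set.uIcc_of_le (by norm_num : (0:ℝ) ≤ 1)] at hu
        have : levelSet R (∅ : Finset K) u = ∅ := by
          rw [levelSet]
          apply Finset.filter_false_of_mem
          intro y _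
          simp only [setProb, Finset.sum_empty, not_lt]
          exact hu.1
        show (0:ℝ) - meas π (levelSet R (∅ : Finset K) u) = 0
        rw [this]
        simp [meas]
      rw [hcongr, intervalIntegral.integral_zero]
    rw [hInt, Psi, if_pos ht1]
    apply IsLeast.csInf_eq
    constructor
    · refine ⟨fun _ => 0, ⟨fun v => by norm_num, fun v _ => rfl, by simp⟩, ?_⟩
      simp [fracFlow]
    · rintro q ⟨g, ⟨h01, h0, hs⟩, rfl⟩
      apply Finset.sum_nonneg
      intro v _
      exact mul_nonneg (mul_nonneg (h01 v).1 (hπnn v))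
        (Finset.sum_nonneg fun c _ => hRnn v c)
  · obtain ⟨θ, ⟨vθ, hvθA, hvθ⟩, hBt, hge, hGmem, hGub⟩ :=
      greedy_max π hπpos A hAne (fun y => setProb R y A) t ht0 ht1
    have hθhalf : (1:ℝ)/2 ≤ θ := hvθ ▸ hfA vθ hvθA
    have hθ1 : θ ≤ 1 := hvθ ▸ hf1 vθ
    have hθ0 : 0 ≤ θ := le_trans (by norm_num) hθhalf
    have hLHS : Psi R π A t
        = t - (t * θ + ∑ v ∈ A, max (setProb R v A - θ) 0 * π v) := by
      rw [Psi, if_pos ht1]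
      apply IsLeast.csInf_eq
      constructor
      · obtain ⟨g, hgF, hgv⟩ := hGmem
        refine ⟨g, hgF, ?_⟩
        rw [hflowAc g t hgF, ← hgv]
      · rintro q ⟨g, hgF, rfl⟩
        rw [hflowAc g t hgF]
        have hub := hGub ⟨g, hgF, rfl⟩
        linarith
    set W := {y : ℝ | y ∈ Set.Icc (0:ℝ) 1 ∧ meas π (levelSet R A y) ≤ t} with hWdef
    have hθW : θ ∈ W := by
      refine ⟨⟨hθ0, hθ1⟩, ?_⟩
      have hsub : levelSet R A θ ⊆ A.filter (fun v => θ < setProb R v A) := by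
        intro y hy
        have h2 : θ < setProb R y A := (Finset.mem_filter.1 hy).2
        have hyA : y ∈ A := by
          by_contra hyA
          linarith [hfAc y hyA]
        exact Finset.mem_filter.2 ⟨hyA, h2⟩
      exact le_trans (meas_mono π hπnn hsub) hBt
    have hWbdd : BddBelow W := ⟨0, fun y hy => hy.1.1⟩
    have hWne : W.Nonempty := ⟨θ, hθW⟩
    have hwfun : wfun R π A t = sInf W := rfl
    have hw0 : 0 ≤ sInf W := le_csInf hWne (fun y hy => hy.1.1)
    have hwθ : sInf W ≤ θ := csInf_le hWbdd hθW
    have hgap : ∀ x, x ∈ Set.Ioo (sInf W) θ → meas π (levelSet R A x) = t := by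
      intro x hx
      have h1 : meas π (levelSet R A x) ≤ t := by
        obtain ⟨y, hyW, hyx⟩ := exists_lt_of_csInf_lt hWne hx.1
        exact le_trans (meas_mono π hπnn (levelSet_anti R A hyx.le)) hyW.2
      have h2 : t ≤ meas π (levelSet R A x) := by
        refine le_trans hge (meas_mono π hπnn ?_)
        intro v hv
        obtain ⟨hvA, hvf⟩ := Finset.mem_filter.1 hv
        exact Finset.mem_filter.2 ⟨Finset.mem_univ v, lt_of_lt_of_le hx.2 hvf⟩
      linarith
    have hint1 : IntervalIntegrable (fun u => t - meas π (levelSet R A u)) volume (sInf W) θ :=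
      intervalIntegrable_const.sub (F_integrable R π A hπnn _ _)
    have hint2 : IntervalIntegrable (fun u => t - meas π (levelSet R A u)) volume θ 1 :=
      intervalIntegrable_const.sub (F_integrable R π A hπnn _ _)
    have hsplitint : ∫ u in (sInf W)..(1:ℝ), (t - meas π (levelSet R A u))
        = (∫ u in (sInf W)..θ, (t - meas π (levelSet R A u)))
          + ∫ u in θ..(1:ℝ), (t - meas π (levelSet R A u)) :=
      (intervalIntegral.integral_add_adjacent_intervals hint1 hint2).symm
    have hzero : ∫ u in (sInf W)..θ, (t - meas π (levelSet R A u)) = 0 := by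
      have h1 : ∫ u in (sInf W)..θ, (t - meas π (levelSet R A u))
          = ∫ u in (sInf W)..θ, (0:ℝ) := by
        apply intervalIntegral.integral_congr_ae
        have hae : ∀ᵐ x ∂(volume : Measure ℝ), x ≠ θ := by
          simp only [MeasureTheory.ae_iff, ne_eq, not_not, Set.setOf_eq_eq_singleton]
          exact Real.volume_singleton
        filter_upwards [hae] with x hx hmem
        rw [Set.uIoc_of_le hwθ] at hmem
        rw [hgap x ⟨hmem.1, lt_of_le_of_ne hmem.2 hx⟩]
        ring
      rw [h1, intervalIntegral.integral_zero]
    have hθint : ∫ u in θ..(1:ℝ), (t - meas π (levelSet R A u))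
        = t * (1 - θ) - ∑ v ∈ A, max (setProb R v A - θ) 0 * π v := by
      rw [intervalIntegral.integral_sub intervalIntegrable_const (F_integrable R π A hπnn θ 1),
        intervalIntegral.integral_const, integral_F R π A hπnn θ 1 hθ1]
      have hterm : ∀ y : K, π y * (min (max (setProb R y A) θ) 1 - θ)
          = π y * max (setProb R y A - θ) 0 := by
        intro y
        congr 1
        have hy1 : max (setProb R y A) θ ≤ 1 := max_le (hf1 y) hθ1
        rw [min_eq_left hy1]
        rcases le_total (setProb R y A) θ with h | h
        · rw [max_eq_right h, max_eq_right (by linarith)]; ring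
        · rw [max_eq_left h, max_eq_left (by linarith)]
      rw [Finset.sum_congr rfl (fun y _ => hterm y)]
      have hsplit2 : ∑ y, π y * max (setProb R y A - θ) 0
          = ∑ v ∈ A, max (setProb R v A - θ) 0 * π v := by
        rw [← Finset.sum_add_sum_compl A (fun y => π y * max (setProb R y A - θ) 0)]
        have hz : ∑ y ∈ Aᶜ, π y * max (setProb R y A - θ) 0 = 0 := by
          apply Finset.sum_eq_zero
          intro y hy
          have : setProb R y A ≤ 1/2 := hfAc y (Finset.mem_compl.1 hy)
          rw [max_eq_right (by linarith), mul_zero]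
        rw [hz, add_zero]
        exact Finset.sum_congr rfl fun v _ => mul_comm _ _
      rw [hsplit2]
      simp only [smul_eq_mul]
      ring
    rw [hLHS, hwfun, hsplitint, hzero, hθint]
    ring


lemma part_two (R : K → K → ℝ) (π : K → ℝ) (A : Finset K)
    (hπpos : ∀ v, 0 < π v) (hπ1 : ∑ v, π v = 1)
    (hRnn : ∀ y v, 0 ≤ R y v) (hrow : ∀ y, ∑ v, R y v = 1)
    (hdiag : ∀ y, 1/2 ≤ R y y)
    (t : ℝ) (ht1 : meas π A < t) (ht2 : t ≤ 1) :
    Psi R π A t = ∫ u in (0:ℝ)..(wfun R π A t), (meas π (levelSet R A u) - t) := by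
  classical
  have hπnn : ∀ v, 0 ≤ π v := fun v => (hπpos v).le
  obtain ⟨hf0, hf1, hfA, hfAc, hsplit⟩ := setProb_facts R π A hRnn hrow hdiag
  have hcompl : meas π A + meas π Aᶜ = 1 := by
    rw [meas, meas, Finset.sum_add_sum_compl]
    exact hπ1
  have hAcne : Aᶜ.Nonempty := by
    rcases Finset.eq_empty_or_nonempty Aᶜ with he | h
    · exfalso
      have h0 : meas π Aᶜ = 0 := by rw [he]; simp [meas]
      linarith
    · exact h
  have hs0 : 0 ≤ 1 - t := by linarith
  have hsle : 1 - t ≤ meas π Aᶜ := by linarith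
  obtain ⟨θ', ⟨v₁, hv₁Ac, hv₁⟩, hB't, hge', hGmem', hGub'⟩ :=
    greedy_max π hπpos Aᶜ hAcne (fun v => - setProb R v A) (1 - t) hs0 hsle
  have hv₁A : v₁ ∉ A := Finset.mem_compl.1 hv₁Ac
  have hv₁' : - setProb R v₁ A = θ' := hv₁
  have hτv : setProb R v₁ A = -θ' := by linarith
  have hτhalf : -θ' ≤ 1/2 := hτv ▸ hfAc v₁ hv₁A
  have hτ0 : 0 ≤ -θ' := hτv ▸ hf0 v₁
  have hBt : meas π (Aᶜ.filter (fun v => θ' < - setProb R v A)) ≤ 1 - t := hB't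
  have hge : 1 - t ≤ meas π (Aᶜ.filter (fun v => θ' ≤ - setProb R v A)) := hge'
  have hGmem : ((1 - t) * θ' + ∑ v ∈ Aᶜ, max (- setProb R v A - θ') 0 * π v) ∈
      {m : ℝ | ∃ g : K → ℝ, IsFracSub π Aᶜ g (1 - t) ∧
        m = ∑ v, g v * π v * (- setProb R v A)} := hGmem'
  have hGub : ∀ m ∈ {m : ℝ | ∃ g : K → ℝ, IsFracSub π Aᶜ g (1 - t) ∧
      m = ∑ v, g v * π v * (- setProb R v A)},
      m ≤ (1 - t) * θ' + ∑ v ∈ Aᶜ, max (- setProb R v A - θ') 0 * π v := hGub'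
  have hflowA : ∀ g : K → ℝ, fracFlow R π g A = ∑ v, g v * π v * setProb R v A :=
    fun g => rfl
  have hneg : ∀ g : K → ℝ,
      ∑ v, g v * π v * (- setProb R v A) = -∑ v, g v * π v * setProb R v A := by
    intro g
    rw [← Finset.sum_neg_distrib]
    exact Finset.sum_congr rfl fun v _ => by ring
  have hLHS : Psi R π A t
      = -((1 - t) * θ' + ∑ v ∈ Aᶜ, max (- setProb R v A - θ') 0 * π v) := by
    rw [Psi, if_neg (not_le.2 ht1)]
    apply IsLeast.csInf_eq
    constructor
    · obtain ⟨g, hgF, hgv⟩ := hGmem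
      refine ⟨g, hgF, ?_⟩
      rw [hflowA g]
      rw [hneg g] at hgv
      linarith
    · rintro q ⟨g, hgF, rfl⟩
      rw [hflowA g]
      have hub := hGub (∑ v, g v * π v * (- setProb R v A)) ⟨g, hgF, rfl⟩
      rw [hneg g] at hub
      linarith
  set W := {y : ℝ | y ∈ Set.Icc (0:ℝ) 1 ∧ meas π (levelSet R A y) ≤ t} with hWdef
  have hkey : ∀ x : ℝ, meas π (levelSet R A x)
      + meas π (Finset.univ.filter (fun y => ¬ x < setProb R y A)) = 1 := by
    intro x
    rw [meas, meas, levelSet, Finset.sum_filter_add_sum_filter_not]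
    exact hπ1
  have hτW : -θ' ∈ W := by
    refine ⟨⟨hτ0, by linarith⟩, ?_⟩
    have hsub : Aᶜ.filter (fun v => θ' ≤ - setProb R v A)
        ⊆ Finset.univ.filter (fun y => ¬ (-θ') < setProb R y A) := by
      intro v hv
      obtain ⟨_, h2⟩ := Finset.mem_filter.1 hv
      refine Finset.mem_filter.2 ⟨Finset.mem_univ v, ?_⟩
      push_neg
      linarith
    have h3 := le_trans hge (meas_mono π hπnn hsub)
    linarith [hkey (-θ')]
  have hWbdd : BddBelow W := ⟨0, fun y hy => hy.1.1⟩
  have hWne : W.Nonempty := ⟨-θ', hτW⟩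
  have hwfun : wfun R π A t = sInf W := rfl
  have hw0 : 0 ≤ sInf W := le_csInf hWne (fun y hy => hy.1.1)
  have hwτ : sInf W ≤ -θ' := csInf_le hWbdd hτW
  have hgap : ∀ x, x ∈ Set.Ioo (sInf W) (-θ') → meas π (levelSet R A x) = t := by
    intro x hx
    have h1 : meas π (levelSet R A x) ≤ t := by
      obtain ⟨y, hyW, hyx⟩ := exists_lt_of_csInf_lt hWne hx.1
      exact le_trans (meas_mono π hπnn (levelSet_anti R A hyx.le)) hyW.2
    have h2 : t ≤ meas π (levelSet R A x) := by
      have hsub : Finset.univ.filter (fun y => ¬ x < setProb R y A)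
          ⊆ Aᶜ.filter (fun v => θ' < - setProb R v A) := by
        intro y hy
        have h3 : setProb R y A ≤ x := by
          have := (Finset.mem_filter.1 hy).2
          push_neg at this
          exact this
        have hyA : y ∉ A := by
          intro hyA
          have := hfA y hyA
          linarith [hx.2, hτhalf]
        refine Finset.mem_filter.2 ⟨Finset.mem_compl.2 hyA, ?_⟩
        linarith [hx.2]
      have h4 := meas_mono π hπnn hsub
      linarith [hkey x]
    linarith
  have hint1 : IntervalIntegrable (fun u => meas π (levelSet R A u) - t) volume 0 (sInf W) :=
    (F_integrable R π A hπnn _ _).sub intervalIntegrable_const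
  have hint2 : IntervalIntegrable (fun u => meas π (levelSet R A u) - t) volume (sInf W) (-θ') :=
    (F_integrable R π A hπnn _ _).sub intervalIntegrable_const
  have hsplitint : ∫ u in (0:ℝ)..(-θ'), (meas π (levelSet R A u) - t)
      = (∫ u in (0:ℝ)..(sInf W), (meas π (levelSet R A u) - t))
        + ∫ u in (sInf W)..(-θ'), (meas π (levelSet R A u) - t) :=
    (intervalIntegral.integral_add_adjacent_intervals hint1 hint2).symm
  have hzero : ∫ u in (sInf W)..(-θ'), (meas π (levelSet R A u) - t) = 0 := by
    have h1 : ∫ u in (sInf W)..(-θ'), (meas π (levelSet R A u) - t)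
        = ∫ u in (sInf W)..(-θ'), (0:ℝ) := by
      apply intervalIntegral.integral_congr_ae
      have hae : ∀ᵐ x ∂(volume : Measure ℝ), x ≠ -θ' := by
        simp only [MeasureTheory.ae_iff, ne_eq, not_not, Set.setOf_eq_eq_singleton]
        exact Real.volume_singleton
      filter_upwards [hae] with x hx hmem
      rw [Set.uIoc_of_le hwτ] at hmem
      rw [hgap x ⟨hmem.1, lt_of_le_of_ne hmem.2 hx⟩]
      ring
    rw [h1, intervalIntegral.integral_zero]
  have hτint : ∫ u in (0:ℝ)..(-θ'), (meas π (levelSet R A u) - t)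
      = (∑ y, π y * min (setProb R y A) (-θ')) - t * (-θ' - 0) := by
    rw [intervalIntegral.integral_sub (F_integrable R π A hπnn _ _) intervalIntegrable_const,
      intervalIntegral.integral_const, integral_F R π A hπnn 0 (-θ') hτ0]
    have hterm : ∀ y : K, π y * (min (max (setProb R y A) 0) (-θ') - 0)
        = π y * min (setProb R y A) (-θ') := by
      intro y
      rw [max_eq_left (hf0 y), sub_zero]
    rw [Finset.sum_congr rfl (fun y _ => hterm y)]
    simp only [smul_eq_mul]
    ring
  have hsum : ∑ y, π y * min (setProb R y A) (-θ')
      = (-θ') - ∑ v ∈ Aᶜ, max (- setProb R v A - θ') 0 * π v := by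
    rw [← Finset.sum_add_sum_compl A (fun y => π y * min (setProb R y A) (-θ'))]
    have hA : ∑ y ∈ A, π y * min (setProb R y A) (-θ') = (-θ') * meas π A := by
      rw [meas, Finset.mul_sum]
      refine Finset.sum_congr rfl fun y hy => ?_
      rw [min_eq_right (by linarith [hfA y hy])]
      ring
    have hAc : ∑ y ∈ Aᶜ, π y * min (setProb R y A) (-θ')
        = (-θ') * meas π Aᶜ - ∑ v ∈ Aᶜ, max (- setProb R v A - θ') 0 * π v := by
      rw [meas, Finset.mul_sum, ← Finset.sum_sub_distrib]
      refine Finset.sum_congr rfl fun y _ => ?_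
      rcases le_total (setProb R y A) (-θ') with h | h
      · rw [min_eq_left h, max_eq_left (by linarith)]
        ring
      · rw [min_eq_right h, max_eq_right (by linarith)]
        ring
    rw [hA, hAc]
    linear_combination (-θ') * hcompl
  have hfinal : ∫ u in (0:ℝ)..(sInf W), (meas π (levelSet R A u) - t)
      = ∫ u in (0:ℝ)..(-θ'), (meas π (levelSet R A u) - t) := by
    rw [hsplitint, hzero, add_zero]
  rw [hLHS, hwfun, hfinal, hτint, hsum]
  ring

end Aux

/-- the rewriting of `Ψ̄(t, Aᶜ)` in terms of the level-set measures. -/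
theorem Psi_eq_levelSet_integral
    (P : K → K → ℝ) (π : K → ℝ) (A : Finset K)
    (hM : IsMarkov P π) (hlazy : IsLazy P)
    (hirr : MCIrreducible P) (hap : MCAperiodic P) :
    (∀ t : ℝ, 0 ≤ t → t ≤ meas π A →
      Psi (rev P π) π A t =
        ∫ u in (wfun (rev P π) π A t)..(1:ℝ), (t - meas π (levelSet (rev P π) A u))) ∧
    (∀ t : ℝ, meas π A < t → t ≤ 1 →
      Psi (rev P π) π A t =
        ∫ u in (0:ℝ)..(wfun (rev P π) π A t), (meas π (levelSet (rev P π) A u) - t)) := by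
  have hπpos := hM.piPos
  have hRnn : ∀ y v, 0 ≤ rev P π y v := fun y v =>
    div_nonneg (mul_nonneg (hπpos v).le (hM.nonneg v y)) (hπpos y).le
  have hrow : ∀ y, ∑ v, rev P π y v = 1 := by
    intro y
    have h1 : ∑ v, rev P π y v = (∑ v, π v * P v y) / π y := by
      rw [Finset.sum_div]
      rfl
    rw [h1, hM.stationary y, div_self (ne_of_gt (hπpos y))]
  have hdiag : ∀ y, (1:ℝ)/2 ≤ rev P π y y := by
    intro y
    have h1 : rev P π y y = P y y := by
      rw [rev, mul_comm, mul_div_assoc, div_self (ne_of_gt (hπpos y)), mul_one]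
    rw [h1]
    exact hlazy y
  exact ⟨fun t ht0 ht1 => part_one (rev P π) π A hπpos hM.piSum hRnn hrow hdiag t ht0 ht1,
    fun t ht1 ht2 => part_two (rev P π) π A hπpos hM.piSum hRnn hrow hdiag t ht1 ht2⟩
end
end

section
/- Let P be a lazy, irreducible, aperiodic Markov chain on a finite state space K with stationary distribution π, and let A ⊆ K be nonempty. Then ψ̄⁺(A) = (1/2)·∫_{1/2}^1 ((π(A) − π(A_u))/π(A))² du. -/
open Finset MeasureTheory

noncomputable section

attribute [local instance] Classical.propDecidable

variable {K : Type*} [Fintype K]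

/-! ### Auxiliary lemmas for the spread identity -/

section SpreadAux

variable {P : K → K → ℝ} {π : K → ℝ}

lemma rev_nonneg (hM : IsMarkov P π) (u v : K) : 0 ≤ rev P π u v :=
  div_nonneg (mul_nonneg (hM.piPos v).le (hM.nonneg v u)) (hM.piPos u).le

lemma rev_row (hM : IsMarkov P π) (u : K) : ∑ v, rev P π u v = 1 := by
  unfold rev
  rw [← Finset.sum_div, hM.stationary u, div_self (hM.piPos u).ne']

lemma rev_diag (hM : IsMarkov P π) (u : K) : rev P π u u = P u u := by
  unfold rev
  rw [mul_comm, mul_div_assoc, div_self (hM.piPos u).ne', mul_one]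

lemma setProb_rev_nonneg (hM : IsMarkov P π) (v : K) (C : Finset K) :
    0 ≤ setProb (rev P π) v C :=
  Finset.sum_nonneg fun c _ => rev_nonneg hM v c

lemma setProb_rev_le_one (hM : IsMarkov P π) (v : K) (C : Finset K) :
    setProb (rev P π) v C ≤ 1 := by
  rw [← rev_row hM v]
  exact Finset.sum_le_sum_of_subset_of_nonneg C.subset_univ
    (fun c _ _ => rev_nonneg hM v c)

lemma setProb_rev_compl (hM : IsMarkov P π) (v : K) (A : Finset K) :
    setProb (rev P π) v Aᶜ = 1 - setProb (rev P π) v A := by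
  have h := Finset.sum_add_sum_compl A (fun c => rev P π v c)
  rw [rev_row hM v] at h
  unfold setProb
  linarith

lemma half_le_setProb_rev (hM : IsMarkov P π) (hlazy : IsLazy P) {A : Finset K} {v : K}
    (hv : v ∈ A) : 1 / 2 ≤ setProb (rev P π) v A := by
  calc (1:ℝ)/2 ≤ P v v := hlazy v
    _ = rev P π v v := (rev_diag hM v).symm
    _ ≤ setProb (rev P π) v A :=
        Finset.single_le_sum (f := fun c => rev P π v c)
          (fun c _ => rev_nonneg hM v c) hv

lemma levelSet_rev_subset (hM : IsMarkov P π) (hlazy : IsLazy P) (A : Finset K) {u : ℝ}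
    (hu : 1 / 2 ≤ u) : levelSet (rev P π) A u ⊆ A := by
  intro y hy
  rw [levelSet, Finset.mem_filter] at hy
  by_contra hyA
  have h1 : setProb (rev P π) y A + rev P π y y ≤ 1 := by
    rw [← rev_row hM y]
    calc setProb (rev P π) y A + rev P π y y
        = ∑ c ∈ insert y A, rev P π y c := by
          rw [Finset.sum_insert hyA]; unfold setProb; ring
      _ ≤ ∑ c, rev P π y c :=
          Finset.sum_le_sum_of_subset_of_nonneg (Finset.subset_univ _)
            (fun c _ _ => rev_nonneg hM y c)
  have h2 := hlazy y
  rw [rev_diag hM y] at h1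
  have := hy.2
  linarith

lemma meas_nonneg' (hM : IsMarkov P π) (B : Finset K) : 0 ≤ meas π B :=
  Finset.sum_nonneg fun v _ => (hM.piPos v).le

lemma meas_mono' (hM : IsMarkov P π) {B C : Finset K} (h : B ⊆ C) :
    meas π B ≤ meas π C :=
  Finset.sum_le_sum_of_subset_of_nonneg h fun v _ _ => (hM.piPos v).le

lemma meas_pos' (hM : IsMarkov P π) {A : Finset K} (hA : A.Nonempty) : 0 < meas π A :=
  Finset.sum_pos (fun v _ => hM.piPos v) hA

lemma pfun_eq (A : Finset K) (u : ℝ) :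
    meas π (levelSet (rev P π) A u)
      = ∑ y, if u < setProb (rev P π) y A then π y else 0 := by
  unfold meas levelSet
  exact Finset.sum_filter _ _

lemma levelSet_eq_filter (hM : IsMarkov P π) (hlazy : IsLazy P) (A : Finset K) {u : ℝ}
    (hu : 1 / 2 ≤ u) :
    levelSet (rev P π) A u = A.filter (fun v => u < setProb (rev P π) v A) := by
  apply Finset.Subset.antisymm
  · intro y hy
    exact Finset.mem_filter.2
      ⟨levelSet_rev_subset hM hlazy A hu hy, (Finset.mem_filter.1 hy).2⟩
  · intro y hy
    exact Finset.mem_filter.2 ⟨Finset.mem_univ y, (Finset.mem_filter.1 hy).2⟩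

lemma pfun_anti (hM : IsMarkov P π) (A : Finset K) :
    Antitone (fun u : ℝ => meas π (levelSet (rev P π) A u)) := by
  intro a b hab
  apply meas_mono' hM
  intro y hy
  rw [levelSet, Finset.mem_filter] at hy ⊢
  exact ⟨hy.1, lt_of_le_of_lt hab hy.2⟩

lemma pfun_measurable (A : Finset K) :
    Measurable (fun u : ℝ => meas π (levelSet (rev P π) A u)) := by
  simp only [pfun_eq]
  apply Finset.measurable_sum
  intro y _
  exact Measurable.ite
    (measurableSet_Iio (a := setProb (rev P π) y A)) measurable_const measurable_const

/-- Existence of the greedy (extremal) fractional subset, for an abstract score `r`. -/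
lemma greedy_general (hπ : ∀ v, 0 < π v) (r : K → ℝ) (A : Finset K)
    {t : ℝ} (ht0 : 0 ≤ t) (htM : t ≤ meas π A) (hA : A.Nonempty) :
    ∃ g : K → ℝ, (∀ v, 0 ≤ g v ∧ g v ≤ 1) ∧ (∀ v ∉ A, g v = 0) ∧
      (∑ v, g v * π v = t) ∧
      ∀ u : ℝ, ∑ v ∈ A, g v * π v * (if u < r v then 1 else 0)
        = min t (meas π (A.filter fun v => u < r v)) := by
  have hmeasmono : ∀ {B C : Finset K}, B ⊆ C → meas π B ≤ meas π C :=
    fun h => Finset.sum_le_sum_of_subset_of_nonneg h fun v _ _ => (hπ v).le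
  set V : Finset ℝ := A.image r with hV
  have hVne : V.Nonempty := hA.image r
  set W : Finset ℝ := V.filter (fun c => meas π (A.filter fun v => c < r v) ≤ t) with hW
  have hWne : W.Nonempty := by
    refine ⟨V.max' hVne, Finset.mem_filter.2 ⟨V.max'_mem hVne, ?_⟩⟩
    have hempty : A.filter (fun v => V.max' hVne < r v) = ∅ := by
      rw [Finset.filter_eq_empty_iff]
      intro v hv
      exact not_lt.2 (V.le_max' (r v) (Finset.mem_image_of_mem r hv))
    rw [hempty]
    simpa [meas] using ht0
  set cs : ℝ := W.min' hWne with hcs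
  have hcsW : cs ∈ W := W.min'_mem hWne
  have hcsV : cs ∈ V := (Finset.mem_filter.1 hcsW).1
  have ha : meas π (A.filter fun v => cs < r v) ≤ t := (Finset.mem_filter.1 hcsW).2
  have hb : t ≤ meas π (A.filter fun v => cs ≤ r v) := by
    by_contra hb
    push_neg at hb
    rcases (A.filter fun v => r v < cs).eq_empty_or_nonempty with hD | hD
    · have hAeq : A.filter (fun v => cs ≤ r v) = A := by
        apply Finset.filter_true_of_mem
        intro v hv
        by_contra h
        push_neg at h
        exact (Finset.eq_empty_iff_forall_notMem.1 hD v)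
          (Finset.mem_filter.2 ⟨hv, h⟩)
      rw [hAeq] at hb
      linarith
    · have hDim : ((A.filter fun v => r v < cs).image r).Nonempty := hD.image r
      set c' : ℝ := ((A.filter fun v => r v < cs).image r).max' hDim with hc'
      obtain ⟨v₀, hv₀D, hv₀⟩ := Finset.mem_image.1 (Finset.max'_mem _ hDim)
      have hv₀A : v₀ ∈ A := (Finset.mem_filter.1 hv₀D).1
      have hc'lt : c' < cs := by rw [hc', ← hv₀]; exact (Finset.mem_filter.1 hv₀D).2
      have hsub : A.filter (fun v => c' < r v) ⊆ A.filter (fun v => cs ≤ r v) := by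
        intro v hv
        obtain ⟨hvA, hvc⟩ := Finset.mem_filter.1 hv
        refine Finset.mem_filter.2 ⟨hvA, ?_⟩
        by_contra h
        push_neg at h
        have hvD : v ∈ A.filter fun w => r w < cs := Finset.mem_filter.2 ⟨hvA, h⟩
        have : r v ≤ c' := Finset.le_max' _ _ (Finset.mem_image_of_mem r hvD)
        linarith
      have hW' : c' ∈ W := by
        refine Finset.mem_filter.2 ⟨?_, le_of_lt (lt_of_le_of_lt (hmeasmono hsub) hb)⟩
        rw [hc', ← hv₀]
        exact Finset.mem_image_of_mem r hv₀A
      have := W.min'_le c' hW'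
      linarith
  -- the tie class
  have hE : (A.filter fun v => r v = cs).Nonempty := by
    obtain ⟨v₀, hv₀A, hrv₀⟩ := Finset.mem_image.1 hcsV
    exact ⟨v₀, Finset.mem_filter.2 ⟨hv₀A, hrv₀⟩⟩
  have hπE : 0 < meas π (A.filter fun v => r v = cs) :=
    Finset.sum_pos (fun v _ => hπ v) hE
  have hsplit : meas π (A.filter fun v => cs ≤ r v)
      = meas π (A.filter fun v => cs < r v) + meas π (A.filter fun v => r v = cs) := by
    simp only [meas, Finset.sum_filter]
    rw [← Finset.sum_add_distrib]
    apply Finset.sum_congr rfl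
    intro v _
    rcases lt_trichotomy (r v) cs with h | h | h
    · rw [if_neg (not_le.2 h), if_neg (by intro hc; linarith), if_neg h.ne]
      norm_num
    · rw [if_pos h.ge, if_neg (by intro hc; exact absurd h hc.ne'), if_pos h]
      ring
    · rw [if_pos h.le, if_pos h, if_neg h.ne']
      ring
  set θ : ℝ := (t - meas π (A.filter fun v => cs < r v))
      / meas π (A.filter fun v => r v = cs) with hθ
  have hθ0 : 0 ≤ θ := div_nonneg (by linarith) hπE.le
  have hθ1 : θ ≤ 1 := by
    rw [hθ, div_le_one hπE]
    linarith
  set g : K → ℝ :=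
    fun v => if v ∈ A then (if cs < r v then 1 else if r v = cs then θ else 0) else 0
    with hgdef
  have hsumA : ∑ v ∈ A, g v * π v = t := by
    have hterm : ∀ v ∈ A, g v * π v
          = (if cs < r v then π v else 0) + (if r v = cs then θ * π v else 0) := by
      intro v hv
      rw [hgdef]
      dsimp only
      rw [if_pos hv]
      rcases lt_trichotomy (r v) cs with h | h | h
      · rw [if_neg (by intro hc; linarith), if_neg h.ne, if_neg (by intro hc; linarith),
          if_neg h.ne]
        ring
      · rw [if_neg (by intro hc; exact absurd h hc.ne'), if_pos h,
          if_neg (by intro hc; exact absurd h hc.ne'), if_pos h]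
        ring
      · rw [if_pos h, if_pos h, if_neg h.ne']
        ring
    rw [Finset.sum_congr rfl hterm, Finset.sum_add_distrib, ← Finset.sum_filter,
      ← Finset.sum_filter]
    have hmul : ∑ v ∈ A.filter (fun v => r v = cs), θ * π v
        = θ * meas π (A.filter fun v => r v = cs) := by
      rw [meas, Finset.mul_sum]
    rw [hmul, hθ, div_mul_cancel₀ _ hπE.ne']
    show meas π (A.filter fun v => cs < r v) + _ = t
    ring
  refine ⟨g, ?_, ?_, ?_, ?_⟩
  · intro v
    rw [hgdef]
    dsimp only
    constructor <;> split_ifs <;> (first | assumption | norm_num)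
  · intro v hv
    rw [hgdef]
    exact if_neg hv
  · rw [← Finset.sum_subset A.subset_univ
      (by intro v _ hv; rw [hgdef]; dsimp only; rw [if_neg hv, zero_mul])]
    exact hsumA
  · intro u
    rcases le_or_gt cs u with hcu | hcu
    · -- on this range the greedy set is full: sum is the measure of the filter
      have hterm : ∀ v ∈ A,
          g v * π v * (if u < r v then 1 else 0) = if u < r v then π v else 0 := by
        intro v hv
        by_cases h : u < r v
        · rw [if_pos h, if_pos h, hgdef]
          dsimp only
          rw [if_pos hv, if_pos (lt_of_le_of_lt hcu h)]
          ring
        · rw [if_neg h, if_neg h]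
          ring
      rw [Finset.sum_congr rfl hterm, ← Finset.sum_filter]
      have hle : meas π (A.filter fun v => u < r v) ≤ t := by
        refine le_trans (hmeasmono ?_) ha
        intro v hv
        obtain ⟨hvA, hvu⟩ := Finset.mem_filter.1 hv
        exact Finset.mem_filter.2 ⟨hvA, lt_of_le_of_lt hcu hvu⟩
      rw [min_eq_right hle]
      rfl
    · -- on this range the whole greedy mass is counted: sum is t
      have hterm : ∀ v ∈ A,
          g v * π v * (if u < r v then 1 else 0) = g v * π v := by
        intro v hv
        by_cases h : u < r v
        · rw [if_pos h]; ring
        · push_neg at h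
          have hg0 : g v = 0 := by
            rw [hgdef]
            dsimp only
            rw [if_pos hv, if_neg (by intro hc; linarith),
              if_neg (by intro hc; rw [hc] at h; linarith)]
          rw [hg0]
          ring
      rw [Finset.sum_congr rfl hterm, hsumA]
      have hge : t ≤ meas π (A.filter fun v => u < r v) := by
        refine le_trans hb (hmeasmono ?_)
        intro v hv
        obtain ⟨hvA, hvc⟩ := Finset.mem_filter.1 hv
        exact Finset.mem_filter.2 ⟨hvA, lt_of_lt_of_le hcu hvc⟩
      rw [min_eq_left hge]

/-- the indicator integral. -/
lemma ind_integral {c : ℝ} (h1 : 1 / 2 ≤ c) (h2 : c ≤ 1) :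
    (∫ u in (1/2 : ℝ)..1, (if c ≤ u then (1:ℝ) else 0)) = 1 - c := by
  have hmono : Monotone (fun u : ℝ => if c ≤ u then (1:ℝ) else 0) := by
    intro a b hab
    dsimp only
    by_cases h : c ≤ a
    · rw [if_pos h, if_pos (h.trans hab)]
    · rw [if_neg h]
      split_ifs <;> norm_num
  rw [← intervalIntegral.integral_add_adjacent_intervals (b := c)
    hmono.intervalIntegrable hmono.intervalIntegrable]
  have hae : ∀ᵐ u : ℝ, u ≠ c := by
    rw [ae_iff]
    simp only [ne_eq, not_not, Set.setOf_eq_eq_singleton]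
    exact measure_singleton c
  have e1 : (∫ u in (1/2 : ℝ)..c, (if c ≤ u then (1:ℝ) else 0)) = 0 := by
    rw [intervalIntegral.integral_congr_ae (g := fun _ => (0:ℝ)) ?_,
      intervalIntegral.integral_zero]
    filter_upwards [hae] with u hu hmem
    rw [Set.uIoc_of_le h1] at hmem
    exact if_neg (by intro h; exact hu (le_antisymm hmem.2 h))
  have e2 : (∫ u in c..(1:ℝ), (if c ≤ u then (1:ℝ) else 0)) = 1 - c := by
    rw [intervalIntegral.integral_congr (g := fun _ => (1:ℝ)) ?_,
      intervalIntegral.integral_const]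
    · norm_num
    · intro u hu
      rw [Set.uIcc_of_le h2] at hu
      exact if_pos hu.1
  rw [e1, e2, zero_add]

/-- integral of the positive part of `t - c` over `[0, M]`. -/
lemma max_integral {c M : ℝ} (h0 : 0 ≤ c) (h1 : c ≤ M) :
    (∫ t in (0:ℝ)..M, max (t - c) 0) = (M - c) ^ 2 / 2 := by
  have hmono : Monotone (fun t : ℝ => max (t - c) 0) := fun a b hab =>
    max_le_max (by linarith) le_rfl
  rw [← intervalIntegral.integral_add_adjacent_intervals (b := c)
    hmono.intervalIntegrable hmono.intervalIntegrable]
  have e1 : (∫ t in (0:ℝ)..c, max (t - c) 0) = 0 := by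
    rw [intervalIntegral.integral_congr (g := fun _ => (0:ℝ)) ?_,
      intervalIntegral.integral_zero]
    intro t ht
    rw [Set.uIcc_of_le h0] at ht
    exact max_eq_right (by linarith [ht.2])
  have e2 : (∫ t in c..M, max (t - c) 0) = (M - c) ^ 2 / 2 := by
    rw [intervalIntegral.integral_congr (g := fun t => t - c) ?_]
    · rw [intervalIntegral.integral_sub intervalIntegral.intervalIntegrable_id intervalIntegrable_const,
        integral_id, intervalIntegral.integral_const]
      simp only [smul_eq_mul]
      ring
    · intro t ht
      rw [Set.uIcc_of_le h1] at ht
      exact max_eq_left (by linarith [ht.1])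
  rw [e1, e2, zero_add]

/-- the flow from a fractional subset as an integral of its level counts. -/
lemma flow_eq (hM : IsMarkov P π) (hlazy : IsLazy P) {A : Finset K} {g : K → ℝ} {t : ℝ}
    (hg : IsFracSub π A g t) :
    fracFlow (rev P π) π g Aᶜ
      = ∫ u in (1/2 : ℝ)..1,
          ∑ v, g v * π v * (if setProb (rev P π) v A ≤ u then (1:ℝ) else 0) := by
  have hint : ∀ v : K, IntervalIntegrable
      (fun u => g v * π v * (if setProb (rev P π) v A ≤ u then (1:ℝ) else 0))
      volume (1/2) 1 := by
    intro v
    have h0 : 0 ≤ g v * π v := mul_nonneg (hg.1 v).1 (hM.piPos v).le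
    apply Monotone.intervalIntegrable
    intro a b hab
    dsimp only
    by_cases h : setProb (rev P π) v A ≤ a
    · rw [if_pos h, if_pos (h.trans hab)]
    · rw [if_neg h, mul_zero]
      split_ifs <;> simp [h0]
  rw [intervalIntegral.integral_finset_sum (fun v _ => hint v)]
  unfold fracFlow
  apply Finset.sum_congr rfl
  intro v _
  by_cases hvA : v ∈ A
  · rw [setProb_rev_compl hM, intervalIntegral.integral_const_mul,
      ind_integral (half_le_setProb_rev hM hlazy hvA) (setProb_rev_le_one hM v A)]
  · rw [hg.2.1 v hvA]
    simp

/-- the exact value of `Ψ̄(t, Aᶜ)` for `0 ≤ t ≤ π(A)`. -/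
lemma psi_eq (hM : IsMarkov P π) (hlazy : IsLazy P) {A : Finset K} (hA : A.Nonempty)
    {t : ℝ} (ht0 : 0 ≤ t) (htM : t ≤ meas π A) :
    Psi (rev P π) π A t
      = ∫ u in (1/2 : ℝ)..1, max (t - meas π (levelSet (rev P π) A u)) 0 := by
  -- complementarity of the two level sums
  have hcompl : ∀ g : K → ℝ, IsFracSub π A g t → ∀ u : ℝ,
      (∑ v, g v * π v * (if setProb (rev P π) v A ≤ u then (1:ℝ) else 0))
        = t - ∑ v, g v * π v * (if u < setProb (rev P π) v A then (1:ℝ) else 0) := by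
    intro g hg u
    have hpt : ∀ v : K,
        g v * π v * (if setProb (rev P π) v A ≤ u then (1:ℝ) else 0)
          + g v * π v * (if u < setProb (rev P π) v A then (1:ℝ) else 0) = g v * π v := by
      intro v
      rcases le_or_gt (setProb (rev P π) v A) u with h | h
      · rw [if_pos h, if_neg (not_lt.2 h)]; ring
      · rw [if_neg (not_le.2 h), if_pos h]; ring
    have hsum := Finset.sum_congr rfl (fun v (_ : v ∈ Finset.univ) => hpt v)
    rw [Finset.sum_add_distrib, hg.2.2] at hsum
    linarith
  -- the upper level sum is at most the measure of the level set
  have hTle : ∀ g : K → ℝ, IsFracSub π A g t → ∀ u : ℝ,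
      (∑ v, g v * π v * (if u < setProb (rev P π) v A then (1:ℝ) else 0))
        ≤ meas π (levelSet (rev P π) A u) := by
    intro g hg u
    rw [pfun_eq]
    apply Finset.sum_le_sum
    intro v _
    by_cases h : u < setProb (rev P π) v A
    · rw [if_pos h, if_pos h, mul_one]
      exact mul_le_of_le_one_left (hM.piPos v).le (hg.1 v).2
    · rw [if_neg h, if_neg h, mul_zero]
  -- the upper level sum is at most `t`
  have hTt : ∀ g : K → ℝ, IsFracSub π A g t → ∀ u : ℝ,
      (∑ v, g v * π v * (if u < setProb (rev P π) v A then (1:ℝ) else 0)) ≤ t := by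
    intro g hg u
    calc (∑ v, g v * π v * (if u < setProb (rev P π) v A then (1:ℝ) else 0))
        ≤ ∑ v, g v * π v := by
          apply Finset.sum_le_sum
          intro v _
          have h0 : 0 ≤ g v * π v := mul_nonneg (hg.1 v).1 (hM.piPos v).le
          split_ifs <;> simp [h0]
      _ = t := hg.2.2
  -- monotonicity hence integrability of the target integrand
  have hFmono : Monotone (fun u : ℝ => max (t - meas π (levelSet (rev P π) A u)) 0) := by
    intro a b hab
    exact max_le_max (by linarith [pfun_anti (P := P) hM A hab]) le_rfl
  -- the greedy achiever
  obtain ⟨g₀, hbd, hz, hs, hkey⟩ :=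
    greedy_general (π := π) hM.piPos (fun v => setProb (rev P π) v A) A ht0 htM hA
  have hg₀ : IsFracSub π A g₀ t := ⟨hbd, hz, hs⟩
  have hval : fracFlow (rev P π) π g₀ Aᶜ
      = ∫ u in (1/2 : ℝ)..1, max (t - meas π (levelSet (rev P π) A u)) 0 := by
    rw [flow_eq hM hlazy hg₀]
    apply intervalIntegral.integral_congr
    intro u hu
    dsimp only
    rw [Set.uIcc_of_le (by norm_num : (1/2:ℝ) ≤ 1)] at hu
    have hT : (∑ v, g₀ v * π v * (if u < setProb (rev P π) v A then (1:ℝ) else 0))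
        = min t (meas π (levelSet (rev P π) A u)) := by
      rw [← Finset.sum_subset A.subset_univ
        (by intro v _ hv; rw [hz v hv, zero_mul, zero_mul]),
        hkey u, levelSet_eq_filter hM hlazy A hu.1]
    rw [hcompl g₀ hg₀ u, hT]
    rcases le_total t (meas π (levelSet (rev P π) A u)) with h | h
    · rw [min_eq_left h, max_eq_right (by linarith)]
      ring
    · rw [min_eq_right h, max_eq_left (by linarith)]
  -- the target is a lower bound for all flows
  have hlb : ∀ q ∈ {q : ℝ | ∃ g : K → ℝ, IsFracSub π A g t
      ∧ q = fracFlow (rev P π) π g Aᶜ},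
      (∫ u in (1/2 : ℝ)..1, max (t - meas π (levelSet (rev P π) A u)) 0) ≤ q := by
    rintro q ⟨g, hg, rfl⟩
    rw [flow_eq hM hlazy hg]
    have hSmono : Monotone (fun u : ℝ =>
        ∑ v, g v * π v * (if setProb (rev P π) v A ≤ u then (1:ℝ) else 0)) := by
      intro a b hab
      apply Finset.sum_le_sum
      intro v _
      have h0 : 0 ≤ g v * π v := mul_nonneg (hg.1 v).1 (hM.piPos v).le
      by_cases h : setProb (rev P π) v A ≤ a
      · rw [if_pos h, if_pos (h.trans hab)]
      · rw [if_neg h, mul_zero]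
        split_ifs <;> simp [h0]
    apply intervalIntegral.integral_mono_on (by norm_num : (1/2:ℝ) ≤ 1)
      hFmono.intervalIntegrable hSmono.intervalIntegrable
    intro u hu
    rw [hcompl g hg u]
    apply max_le
    · linarith [hTle g hg u]
    · linarith [hTt g hg u]
  -- conclude
  unfold Psi
  rw [if_pos htM]
  apply le_antisymm
  · exact csInf_le ⟨_, hlb⟩ ⟨g₀, hg₀, hval.symm⟩
  · exact le_csInf ⟨_, ⟨g₀, hg₀, rfl⟩⟩ hlb

end SpreadAux

/-- `ψ̄⁺(A) = (1/2)·∫_{1/2}^1 ((π(A) − π(A_u))/π(A))² du`. -/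
theorem spread_eq_levelSet_integral
    (P : K → K → ℝ) (π : K → ℝ) (A : Finset K)
    (hM : IsMarkov P π) (hlazy : IsLazy P)
    (hirr : MCIrreducible P) (hap : MCAperiodic P)
    (hA : A.Nonempty) :
    psiPlus (rev P π) π A =
      (1 / 2) * ∫ u in (1/2 : ℝ)..(1:ℝ),
        ((meas π A - meas π (levelSet (rev P π) A u)) / meas π A) ^ 2 := by
  have h12 : (1/2 : ℝ) ≤ 1 := by norm_num
  have hM0 : 0 < meas π A := meas_pos' hM hA
  have hpnn : ∀ u : ℝ, 0 ≤ meas π (levelSet (rev P π) A u) := fun u => meas_nonneg' hM _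
  have hpM : ∀ u : ℝ, 1/2 ≤ u → meas π (levelSet (rev P π) A u) ≤ meas π A :=
    fun u hu => meas_mono' hM (levelSet_rev_subset hM hlazy A hu)
  have step1 : (∫ t in (0:ℝ)..(meas π A), Psi (rev P π) π A t)
      = ∫ t in (0:ℝ)..(meas π A), ∫ u in (1/2:ℝ)..1,
          max (min t (meas π A) - meas π (levelSet (rev P π) A u)) 0 := by
    apply intervalIntegral.integral_congr
    intro t ht
    rw [Set.uIcc_of_le hM0.le] at ht
    rw [psi_eq hM hlazy hA ht.1 ht.2]
    apply intervalIntegral.integral_congr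
    intro u _
    dsimp only
    rw [min_eq_left ht.2]
  have hunc : Measurable (Function.uncurry fun t u : ℝ =>
      max (min t (meas π A) - meas π (levelSet (rev P π) A u)) 0) := by
    apply Measurable.max ?_ measurable_const
    exact (measurable_fst.min measurable_const).sub
      ((pfun_measurable (P := P) A).comp measurable_snd)
  have step2 : (∫ t in (0:ℝ)..(meas π A), ∫ u in (1/2:ℝ)..1,
        max (min t (meas π A) - meas π (levelSet (rev P π) A u)) 0)
      = ∫ u in (1/2:ℝ)..1, ∫ t in (0:ℝ)..(meas π A),
          max (min t (meas π A) - meas π (levelSet (rev P π) A u)) 0 := by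
    simp only [intervalIntegral.integral_of_le hM0.le, intervalIntegral.integral_of_le h12]
    haveI i1 : IsFiniteMeasure (volume.restrict (Set.Ioc (0:ℝ) (meas π A))) :=
      ⟨by rw [Measure.restrict_apply_univ]; exact measure_Ioc_lt_top⟩
    haveI i2 : IsFiniteMeasure (volume.restrict (Set.Ioc (1/2:ℝ) 1)) :=
      ⟨by rw [Measure.restrict_apply_univ]; exact measure_Ioc_lt_top⟩
    apply MeasureTheory.integral_integral_swap
    apply MeasureTheory.Integrable.mono' (g := fun _ => meas π A)
      (MeasureTheory.integrable_const _) hunc.aestronglyMeasurable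
    apply Filter.Eventually.of_forall
    rintro ⟨t, u⟩
    show ‖max (min t (meas π A) - meas π (levelSet (rev P π) A u)) 0‖ ≤ meas π A
    rw [Real.norm_eq_abs, abs_of_nonneg (le_max_right _ _)]
    apply max_le _ hM0.le
    have h1 := hpnn u
    have h2 := min_le_right t (meas π A)
    linarith
  have step3 : (∫ u in (1/2:ℝ)..1, ∫ t in (0:ℝ)..(meas π A),
        max (min t (meas π A) - meas π (levelSet (rev P π) A u)) 0)
      = ∫ u in (1/2:ℝ)..1, (meas π A - meas π (levelSet (rev P π) A u))^2 / 2 := by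
    apply intervalIntegral.integral_congr
    intro u hu
    dsimp only
    rw [Set.uIcc_of_le h12] at hu
    have e : (∫ t in (0:ℝ)..(meas π A),
        max (min t (meas π A) - meas π (levelSet (rev P π) A u)) 0)
        = ∫ t in (0:ℝ)..(meas π A), max (t - meas π (levelSet (rev P π) A u)) 0 := by
      apply intervalIntegral.integral_congr
      intro s hs
      dsimp only
      rw [Set.uIcc_of_le hM0.le] at hs
      rw [min_eq_left hs.2]
    rw [e, max_integral (hpnn u) (hpM u hu.1)]
  have hrhs : (∫ u in (1/2:ℝ)..(1:ℝ),
        ((meas π A - meas π (levelSet (rev P π) A u)) / meas π A)^2)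
      = (2 / (meas π A)^2) * ∫ u in (1/2:ℝ)..1,
          (meas π A - meas π (levelSet (rev P π) A u))^2 / 2 := by
    rw [← intervalIntegral.integral_const_mul]
    apply intervalIntegral.integral_congr
    intro u _
    dsimp only
    rw [div_pow]
    field_simp
  unfold psiPlus
  rw [step1, step2, step3, hrhs]
  generalize (∫ u in (1/2:ℝ)..1,
    (meas π A - meas π (levelSet (rev P π) A u))^2 / 2 : ℝ) = I
  field_simp
end
end

section
/- Let P be an irreducible, aperiodic Markov chain on a finite state space K with stationary distribution π, and let A ⊆ K be nonempty. Then ψ_evo(A) ≤ (1/2)·∫₀¹ (π(A_u)/π(A))·log(π(A_u)/π(A)) du (with the convention 0·log 0 = 0). -/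
open Finset MeasureTheory

noncomputable section

attribute [local instance] Classical.propDecidable

variable {K : Type*} [Fintype K]

/-- Pointwise inequality: `x - √x ≤ (1/2)·x·log x` for `x ≥ 0`. -/
lemma aux_sq_sub_le {s : ℝ} (hs : 0 ≤ s) :
    s ^ 2 - s ≤ 1 / 2 * (s ^ 2 * Real.log (s ^ 2)) := by
  rw [Real.log_pow]
  rcases eq_or_lt_of_le hs with h | h
  · rw [← h]; norm_num
  · have h1 : 1 - s⁻¹ ≤ Real.log s := Real.one_sub_inv_le_log_of_pos h
    have h3 := mul_le_mul_of_nonneg_left h1 h.le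
    have h4 : s * (1 - s⁻¹) = s - 1 := by field_simp
    rw [h4] at h3
    have h5 : s * (s - 1) ≤ s * (s * Real.log s) :=
      mul_le_mul_of_nonneg_left h3 h.le
    push_cast
    nlinarith [h5]

lemma aux_sub_sqrt_le_half_mul_log {x : ℝ} (hx : 0 ≤ x) :
    x - Real.sqrt x ≤ 1 / 2 * (x * Real.log x) := by
  have := aux_sq_sub_le (Real.sqrt_nonneg x)
  rwa [Real.sq_sqrt hx] at this

/-- The level-set measure is an antitone function of the level. -/
lemma aux_levelSet_anti (R : K → K → ℝ) (π : K → ℝ) (A : Finset K)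
    (hπ : ∀ v, 0 ≤ π v) :
    Antitone (fun u : ℝ => meas π (levelSet R A u)) := by
  intro u u' huu'
  apply Finset.sum_le_sum_of_subset_of_nonneg
  · intro y hy
    simp only [levelSet, Finset.mem_filter, Finset.mem_univ, true_and] at *
    exact lt_of_le_of_lt huu' hy
  · intro v _ _; exact hπ v

/-- Bounds for the reversed kernel's set probabilities. -/
lemma aux_setProb_mem (P : K → K → ℝ) (π : K → ℝ) (A : Finset K)
    (hM : IsMarkov P π) (y : K) :
    0 ≤ setProb (rev P π) y A ∧ setProb (rev P π) y A ≤ 1 := by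
  have hnn : ∀ v, 0 ≤ rev P π y v := fun v =>
    div_nonneg (mul_nonneg (hM.piPos v).le (hM.nonneg v y)) (hM.piPos y).le
  constructor
  · exact Finset.sum_nonneg fun a _ => hnn a
  · have h1 : setProb (rev P π) y A ≤ ∑ v, rev P π y v :=
      Finset.sum_le_sum_of_subset_of_nonneg (Finset.subset_univ A)
        (fun v _ _ => hnn v)
    have h2 : ∑ v, rev P π y v = 1 := by
      simp only [rev]
      rw [← Finset.sum_div, hM.stationary y, div_self (hM.piPos y).ne']
    linarith

/-- The expected level-set measure equals the measure of `A`. -/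
lemma aux_integral_levelSet (P : K → K → ℝ) (π : K → ℝ) (A : Finset K)
    (hM : IsMarkov P π) :
    ∫ u in (0:ℝ)..1, meas π (levelSet (rev P π) A u) = meas π A := by
  classical
  have hp01 := aux_setProb_mem P π A hM
  have hFeq : ∀ u : ℝ, meas π (levelSet (rev P π) A u) =
      ∑ y, (if u < setProb (rev P π) y A then π y else 0) := by
    intro u
    simp only [meas, levelSet]
    rw [Finset.sum_filter]
  have hgAnti : ∀ y : K,
      Antitone (fun u : ℝ => if u < setProb (rev P π) y A then π y else 0) := by
    intro y u u' h
    dsimp only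
    by_cases h2 : u' < setProb (rev P π) y A
    · rw [if_pos h2, if_pos (lt_of_le_of_lt h h2)]
    · rw [if_neg h2]
      split_ifs with h1
      · exact (hM.piPos y).le
      · exact le_refl 0
  have hgInt : ∀ y : K,
      ∫ u in (0:ℝ)..1, (if u < setProb (rev P π) y A then π y else 0) =
        π y * setProb (rev P π) y A := by
    intro y
    set c := setProb (rev P π) y A with hc
    have hae : ∀ᵐ u ∂(volume : Measure ℝ), u ≠ c := by
      have : (volume : Measure ℝ) {u | u = c} = 0 := by
        simpa using measure_singleton (μ := (volume : Measure ℝ)) c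
      rw [MeasureTheory.ae_iff]
      simpa using this
    have hcongr : (∫ u in (0:ℝ)..1, (if u < c then π y else 0)) =
        ∫ u in (0:ℝ)..1, Set.indicator {x : ℝ | x ≤ c} (fun _ => π y) u := by
      apply intervalIntegral.integral_congr_ae
      filter_upwards [hae] with u hu _
      rcases lt_trichotomy u c with h | h | h
      · rw [if_pos h, Set.indicator_of_mem (show u ∈ {x : ℝ | x ≤ c} from h.le)]
      · exact absurd h hu
      · rw [if_neg (not_lt.2 h.le),
          Set.indicator_of_notMem (show u ∉ {x : ℝ | x ≤ c} from not_le.2 h)]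
    rw [hcongr, intervalIntegral.integral_indicator ⟨(hp01 y).1, (hp01 y).2⟩,
      intervalIntegral.integral_const]
    simp [mul_comm, hc]
  have hsum : (∫ u in (0:ℝ)..1, meas π (levelSet (rev P π) A u)) =
      ∑ y, ∫ u in (0:ℝ)..1, (if u < setProb (rev P π) y A then π y else 0) := by
    rw [← intervalIntegral.integral_finset_sum
      (fun y _ => (hgAnti y).intervalIntegrable)]
    exact intervalIntegral.integral_congr fun u _ => hFeq u
  rw [hsum]
  simp_rw [hgInt]
  have hterm : ∀ y, π y * setProb (rev P π) y A = ∑ a ∈ A, π a * P a y := by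
    intro y
    simp only [setProb, rev, Finset.mul_sum]
    refine Finset.sum_congr rfl fun a _ => ?_
    have hy := (hM.piPos y).ne'
    field_simp
  simp_rw [hterm]
  calc (∑ y, ∑ a ∈ A, π a * P a y) = ∑ a ∈ A, ∑ y, π a * P a y :=
        Finset.sum_comm
  _ = ∑ a ∈ A, π a := by
      refine Finset.sum_congr rfl fun a _ => ?_
      rw [← Finset.mul_sum, hM.rowSum, mul_one]
  _ = meas π A := rfl

/-- `ψ_evo(A) ≤ (1/2)·∫₀¹ (π(A_u)/π(A))·log(π(A_u)/π(A)) du`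
(with the convention `0·log 0 = 0`, automatic since `Real.log 0 = 0`). -/
theorem evolving_le_half_entropy_integral
    (P : K → K → ℝ) (π : K → ℝ) (A : Finset K)
    (hM : IsMarkov P π)
    (hirr : MCIrreducible P) (hap : MCAperiodic P)
    (hA : A.Nonempty) :
    psiEvo (rev P π) π A ≤
      (1 / 2) * ∫ u in (0:ℝ)..(1:ℝ),
        (meas π (levelSet (rev P π) A u) / meas π A) *
          Real.log (meas π (levelSet (rev P π) A u) / meas π A) := by
  classical
  have hMpos : 0 < meas π A := Finset.sum_pos (fun v _ => hM.piPos v) hA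
  have hFanti := aux_levelSet_anti (rev P π) π A (fun v => (hM.piPos v).le)
  have hFnonneg : ∀ u : ℝ, 0 ≤ meas π (levelSet (rev P π) A u) := fun u =>
    Finset.sum_nonneg fun v _ => (hM.piPos v).le
  have hFle : ∀ u : ℝ, meas π (levelSet (rev P π) A u) ≤ 1 := by
    intro u
    calc meas π (levelSet (rev P π) A u) ≤ ∑ v, π v :=
          Finset.sum_le_sum_of_subset_of_nonneg (Finset.subset_univ _)
            (fun v _ _ => (hM.piPos v).le)
    _ = 1 := hM.piSum
  have hrAnti : Antitone
      (fun u : ℝ => meas π (levelSet (rev P π) A u) / meas π A) := by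
    intro u u' h
    have := hFanti h
    dsimp only
    gcongr
  have hsAnti : Antitone
      (fun u : ℝ => Real.sqrt (meas π (levelSet (rev P π) A u) / meas π A)) :=
    fun u u' h => Real.sqrt_le_sqrt (hrAnti h)
  have hInt_r : IntervalIntegrable
      (fun u : ℝ => meas π (levelSet (rev P π) A u) / meas π A) volume 0 1 :=
    hrAnti.intervalIntegrable
  have hInt_s : IntervalIntegrable
      (fun u : ℝ => Real.sqrt (meas π (levelSet (rev P π) A u) / meas π A))
      volume 0 1 := hsAnti.intervalIntegrable
  -- integrability of the entropy integrand
  have hmeas_r : Measurable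
      (fun u : ℝ => meas π (levelSet (rev P π) A u) / meas π A) :=
    hrAnti.measurable
  obtain ⟨C, hC⟩ : ∃ C, ∀ x ∈ Set.Icc (0:ℝ) (1 / meas π A),
      ‖x * Real.log x‖ ≤ C :=
    isCompact_Icc.exists_bound_of_continuousOn Real.continuous_mul_log.continuousOn
  have hbound : ∀ u : ℝ,
      ‖(meas π (levelSet (rev P π) A u) / meas π A) *
        Real.log (meas π (levelSet (rev P π) A u) / meas π A)‖ ≤ C := by
    intro u
    apply hC
    refine ⟨div_nonneg (hFnonneg u) hMpos.le, ?_⟩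
    gcongr
    exact hFle u
  have hInt_ent : IntervalIntegrable
      (fun u : ℝ => (meas π (levelSet (rev P π) A u) / meas π A) *
        Real.log (meas π (levelSet (rev P π) A u) / meas π A)) volume 0 1 := by
    apply IntervalIntegrable.mono_fun' (g := fun _ => C) intervalIntegrable_const
    · exact (Real.continuous_mul_log.measurable.comp hmeas_r).aestronglyMeasurable
    · exact Filter.Eventually.of_forall hbound
  have hone : (∫ u in (0:ℝ)..1,
      meas π (levelSet (rev P π) A u) / meas π A) = 1 := by
    rw [intervalIntegral.integral_div, aux_integral_levelSet P π A hM,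
      div_self hMpos.ne']
  have hpsi : psiEvo (rev P π) π A = ∫ u in (0:ℝ)..1,
      (meas π (levelSet (rev P π) A u) / meas π A -
        Real.sqrt (meas π (levelSet (rev P π) A u) / meas π A)) := by
    rw [intervalIntegral.integral_sub hInt_r hInt_s, hone, psiEvo]
  rw [hpsi, ← intervalIntegral.integral_const_mul]
  apply intervalIntegral.integral_mono_on zero_le_one (hInt_r.sub hInt_s)
    (hInt_ent.const_mul _)
  intro u _
  exact aux_sub_sqrt_le_half_mul_log (div_nonneg (hFnonneg u) hMpos.le)
end
end
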